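/- For complex numbers a, b, c, d (such that all theta values below are nonzero where needed), the Fay trisecant identity holds: θ(a+c)θ(a-c)θ(b+d)θ(b-d) = θ(a+b)θ(a-b)θ(c+d)θ(c-d) + θ(a+d)θ(a-d)θ(b+c)θ(b-c), where θ = θ_τ is the Jacobi theta function for a fixed τ with Im(τ) > 0. -/

import Mathlib

/-- The Jacobi theta function
`θ_τ(υ) = (1/i) ∑_{n ∈ ℤ} (-1)^n exp(πiτ(n+1/2)²) exp(πi(2n+1)υ)`. -/
noncomputable def theta (τ υ : ℂ) : ℂ :=
  (1 / Complex.I) * ∑' n : ℤ, (-1 : ℂ) ^ n *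
    Complex.exp ((Real.pi : ℂ) * Complex.I * τ * ((n : ℂ) + 1 / 2) ^ 2) *
    Complex.exp ((Real.pi : ℂ) * Complex.I * (2 * (n : ℂ) + 1) * υ)

noncomputable section

namespace Fay

/-- single theta term -/
def ft (τ u : ℂ) (n : ℤ) : ℂ :=
  (-1 : ℂ) ^ n *
    Complex.exp ((Real.pi : ℂ) * Complex.I * τ * ((n : ℂ) + 1 / 2) ^ 2) *
    Complex.exp ((Real.pi : ℂ) * Complex.I * (2 * (n : ℂ) + 1) * u)

lemma ft_exp (τ u : ℂ) (n : ℤ) :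
    ft τ u n = Complex.exp ((Real.pi : ℂ) * Complex.I *
      ((n : ℂ) + τ * ((n : ℂ) + 1 / 2) ^ 2 + (2 * (n : ℂ) + 1) * u)) := by
  have h1 : ((-1 : ℂ)) ^ n = Complex.exp ((Real.pi : ℂ) * Complex.I * (n : ℂ)) := by
    rw [show ((Real.pi : ℂ) * Complex.I * (n : ℂ)) = (n : ℂ) * ((Real.pi : ℂ) * Complex.I) by ring,
      Complex.exp_int_mul, Complex.exp_pi_mul_I]
  rw [ft, h1, ← Complex.exp_add, ← Complex.exp_add]
  congr 1
  ring

lemma ft_eq (τ u : ℂ) (n : ℤ) :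
    ft τ u n = Complex.exp ((Real.pi : ℂ) * Complex.I * (τ / 4 + u)) *
      jacobiTheta₂_term n (u + (τ + 1) / 2) τ := by
  rw [ft_exp, jacobiTheta₂_term, ← Complex.exp_add]
  congr 1
  ring

lemma summable_ft {τ : ℂ} (hτ : 0 < τ.im) (u : ℂ) : Summable (ft τ u) := by
  have h := (summable_jacobiTheta₂_term_iff (u + (τ + 1) / 2) τ).mpr hτ
  exact (h.mul_left (Complex.exp ((Real.pi : ℂ) * Complex.I * (τ / 4 + u)))).congr
    (fun n => (ft_eq τ u n).symm)

abbrev ι4 : Type := ℤ × ℤ × ℤ × ℤ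

/-- integer-lattice theta term, with 4th coordinate `W = 1 - X - Y - Z + 2k`. -/
def Gt (τ w1 w2 w3 w4 : ℂ) (x : ι4) : ℂ :=
  Complex.exp ((Real.pi : ℂ) * Complex.I *
    (τ * ((x.1 : ℂ) ^ 2 + (x.2.1 : ℂ) ^ 2 + (x.2.2.1 : ℂ) ^ 2 +
        ((1 - x.1 - x.2.1 - x.2.2.1 + 2 * x.2.2.2 : ℤ) : ℂ) ^ 2) +
      2 * ((x.1 : ℂ) * w1 + (x.2.1 : ℂ) * w2 + (x.2.2.1 : ℂ) * w3 +
        ((1 - x.1 - x.2.1 - x.2.2.1 + 2 * x.2.2.2 : ℤ) : ℂ) * w4)))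

def Jf (τ w1 w2 w3 w4 : ℂ) : ℂ := ∑' x : ι4, Gt τ w1 w2 w3 w4 x

def negEquiv : ι4 ≃ ι4 :=
  ⟨fun x => (x.1, x.2.1, x.2.2.1, x.1 + x.2.1 + x.2.2.1 - 1 - x.2.2.2),
   fun x => (x.1, x.2.1, x.2.2.1, x.1 + x.2.1 + x.2.2.1 - 1 - x.2.2.2),
   fun x => by simp, fun x => by simp⟩

/-- negating the 4th argument of `Jf` -/
lemma Jf_neg (τ w1 w2 w3 w4 : ℂ) : Jf τ w1 w2 w3 (-w4) = Jf τ w1 w2 w3 w4 := by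
  rw [Jf, ← negEquiv.tsum_eq (Gt τ w1 w2 w3 (-w4))]
  refine tsum_congr fun x => ?_
  unfold Gt negEquiv
  simp only [Equiv.coe_fn_mk]
  congr 1
  push_cast
  ring

def sset : Set ι4 := {v | (v.1 + v.2.1 + v.2.2.1 + v.2.2.2) % 2 = 0}

def evenEquiv : ι4 ≃ ↥sset where
  toFun x := ⟨(x.2.2.2, x.1 + x.2.1 - 1 - x.2.2.2, x.1 + x.2.2.1 - 1 - x.2.2.2,
      x.2.2.2 - x.2.1 - x.2.2.1), by simp only [sset, Set.mem_setOf_eq]; omega⟩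
  invFun v :=
    ((v.1.1 + v.1.2.1 + v.1.2.2.1 + v.1.2.2.2) / 2 + 1,
     v.1.2.1 + 1 + v.1.1 - ((v.1.1 + v.1.2.1 + v.1.2.2.1 + v.1.2.2.2) / 2 + 1),
     v.1.2.2.1 + 1 + v.1.1 - ((v.1.1 + v.1.2.1 + v.1.2.2.1 + v.1.2.2.2) / 2 + 1),
     v.1.1)
  left_inv x := by
    obtain ⟨X, Y, Z, k⟩ := x
    rw [Prod.ext_iff, Prod.ext_iff, Prod.ext_iff]
    dsimp only
    omega
  right_inv v := by
    obtain ⟨⟨m, n, p, r⟩, hv⟩ := v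
    simp only [sset, Set.mem_setOf_eq] at hv
    apply Subtype.ext
    rw [Prod.ext_iff, Prod.ext_iff, Prod.ext_iff]
    dsimp only
    omega

def oddEquiv : ι4 ≃ ↥(ssetᶜ) where
  toFun x := ⟨(x.2.2.2, x.1 + x.2.1 - 1 - x.2.2.2, x.1 + x.2.2.1 - 1 - x.2.2.2,
      x.2.1 + x.2.2.1 - 1 - x.2.2.2), by
        simp only [sset, Set.mem_compl_iff, Set.mem_setOf_eq]; omega⟩
  invFun v :=
    ((v.1.2.1 + v.1.2.2.1 - v.1.2.2.2 + v.1.1 + 1) / 2,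
     v.1.2.1 + 1 + v.1.1 - ((v.1.2.1 + v.1.2.2.1 - v.1.2.2.2 + v.1.1 + 1) / 2),
     v.1.2.2.1 + 1 + v.1.1 - ((v.1.2.1 + v.1.2.2.1 - v.1.2.2.2 + v.1.1 + 1) / 2),
     v.1.1)
  left_inv x := by
    obtain ⟨X, Y, Z, k⟩ := x
    rw [Prod.ext_iff, Prod.ext_iff, Prod.ext_iff]
    dsimp only
    omega
  right_inv v := by
    obtain ⟨⟨m, n, p, r⟩, hv⟩ := v
    simp only [sset, Set.mem_compl_iff, Set.mem_setOf_eq] at hv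
    apply Subtype.ext
    rw [Prod.ext_iff, Prod.ext_iff, Prod.ext_iff]
    dsimp only
    omega

lemma term_even (τ a b c d : ℂ) (X Y Z k : ℤ) :
    ft τ (a + c) k * (ft τ (a - c) (X + Y - 1 - k) *
      (ft τ (b + d) (X + Z - 1 - k) * ft τ (b - d) (k - Y - Z))) =
    Gt τ (a + b) (a - b) (c + d) (c - d) (X, Y, Z, k) := by
  rw [ft_exp, ft_exp, ft_exp, ft_exp, ← Complex.exp_add, ← Complex.exp_add, ← Complex.exp_add, Gt]
  refine Complex.exp_eq_exp_iff_exists_int.mpr ⟨X - 1, ?_⟩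
  push_cast
  ring

lemma term_odd (τ a b c d : ℂ) (X Y Z k : ℤ) :
    ft τ (a + c) k * (ft τ (a - c) (X + Y - 1 - k) *
      (ft τ (b + d) (X + Z - 1 - k) * ft τ (b - d) (Y + Z - 1 - k))) =
    -Gt τ (a + d) (a - d) (b + c) (c - b) (X, Y, Z, k) := by
  have hGt : -Gt τ (a + d) (a - d) (b + c) (c - b) (X, Y, Z, k) =
      Complex.exp ((Real.pi : ℂ) * Complex.I *
        (τ * (((X : ℤ) : ℂ) ^ 2 + ((Y : ℤ) : ℂ) ^ 2 + ((Z : ℤ) : ℂ) ^ 2 +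
            ((1 - X - Y - Z + 2 * k : ℤ) : ℂ) ^ 2) +
          2 * (((X : ℤ) : ℂ) * (a + d) + ((Y : ℤ) : ℂ) * (a - d) + ((Z : ℤ) : ℂ) * (b + c) +
            ((1 - X - Y - Z + 2 * k : ℤ) : ℂ) * (c - b))) + (Real.pi : ℂ) * Complex.I) := by
    rw [Complex.exp_add, Complex.exp_pi_mul_I, Gt]
    ring
  rw [hGt, ft_exp, ft_exp, ft_exp, ft_exp, ← Complex.exp_add, ← Complex.exp_add,
    ← Complex.exp_add]
  refine Complex.exp_eq_exp_iff_exists_int.mpr ⟨X + Y + Z - k - 2, ?_⟩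
  push_cast
  ring

set_option maxHeartbeats 1000000 in
lemma key {τ : ℂ} (hτ : 0 < τ.im) (a b c d : ℂ) :
    theta τ (a + c) * theta τ (a - c) * theta τ (b + d) * theta τ (b - d) =
      Jf τ (a + b) (a - b) (c + d) (c - d) - Jf τ (a + d) (a - d) (b + c) (c - b) := by
  have hN : ∀ u : ℂ, Summable fun n => ‖ft τ u n‖ :=
    fun u => summable_norm_iff.mpr (summable_ft hτ u)
  have hN2 : Summable fun z : ℤ × ℤ => ‖ft τ (b + d) z.1 * ft τ (b - d) z.2‖ :=
    summable_norm_iff.mpr (summable_mul_of_summable_norm (hN _) (hN _))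
  have hP3 : Summable (fun z : ℤ × ℤ × ℤ =>
      ft τ (a - c) z.1 * (ft τ (b + d) z.2.1 * ft τ (b - d) z.2.2)) :=
    (summable_mul_of_summable_norm (hN (a - c)) hN2).congr (fun z => rfl)
  have hN3 : Summable fun z : ℤ × ℤ × ℤ =>
      ‖ft τ (a - c) z.1 * (ft τ (b + d) z.2.1 * ft τ (b - d) z.2.2)‖ :=
    summable_norm_iff.mpr hP3
  set F : ι4 → ℂ := fun v =>
    ft τ (a + c) v.1 * (ft τ (a - c) v.2.1 * (ft τ (b + d) v.2.2.1 * ft τ (b - d) v.2.2.2))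
    with hF_def
  have hF : Summable F :=
    (summable_mul_of_summable_norm (hN (a + c)) hN3).congr (fun v => rfl)
  have hθ : ∀ u : ℂ, theta τ u = 1 / Complex.I * ∑' n : ℤ, ft τ u n := fun u => rfl
  have hprod : theta τ (a + c) * theta τ (a - c) * theta τ (b + d) * theta τ (b - d) =
      ∑' v : ι4, F v := by
    rw [hθ, hθ, hθ, hθ]
    have hI : ∀ S1 S2 S3 S4 : ℂ,
        1 / Complex.I * S1 * (1 / Complex.I * S2) * (1 / Complex.I * S3) *
          (1 / Complex.I * S4) = S1 * (S2 * (S3 * S4)) := by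
      intro S1 S2 S3 S4
      have h4 : Complex.I ^ 4 = 1 := by
        rw [show (4 : ℕ) = 2 * 2 from rfl, pow_mul, Complex.I_sq]
        norm_num
      field_simp
      linear_combination (-(S1 * S2 * S3 * S4)) * h4
    rw [hI]
    rw [tsum_mul_tsum_of_summable_norm (hN (b + d)) (hN (b - d)),
      tsum_mul_tsum_of_summable_norm (hN (a - c)) hN2,
      tsum_mul_tsum_of_summable_norm (hN (a + c)) hN3]
  have hsplit : (∑' v : ↥sset, F v) + ∑' v : ↥(ssetᶜ), F v = ∑' v : ι4, F v :=
    Summable.tsum_add_tsum_compl (hF.subtype _) (hF.subtype _)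
  have heven : (∑' v : ↥sset, F v) = Jf τ (a + b) (a - b) (c + d) (c - d) := by
    rw [← evenEquiv.tsum_eq (fun v : ↥sset => F v), Jf]
    refine tsum_congr fun x => ?_
    obtain ⟨X, Y, Z, k⟩ := x
    exact term_even τ a b c d X Y Z k
  have hodd : (∑' v : ↥(ssetᶜ), F v) = -Jf τ (a + d) (a - d) (b + c) (c - b) := by
    rw [← oddEquiv.tsum_eq (fun v : ↥(ssetᶜ) => F v), Jf, ← tsum_neg]
    refine tsum_congr fun x => ?_
    obtain ⟨X, Y, Z, k⟩ := x
    exact term_odd τ a b c d X Y Z k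
  rw [hprod, ← hsplit, heven, hodd]
  ring

end Fay

end


theorem stmt11 (τ a b c d : ℂ) (hτ : 0 < τ.im) :
    theta τ (a + c) * theta τ (a - c) * theta τ (b + d) * theta τ (b - d) =
      theta τ (a + b) * theta τ (a - b) * theta τ (c + d) * theta τ (c - d) +
      theta τ (a + d) * theta τ (a - d) * theta τ (b + c) * theta τ (b - c) := by
  rw [Fay.key hτ a b c d, Fay.key hτ a c b d, Fay.key hτ a b d c]
  rw [show c - b = -(b - c) from by ring, Fay.Jf_neg, show d - b = -(b - d) from by ring,
    Fay.Jf_neg, show d - c = -(c - d) from by ring, Fay.Jf_neg,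
    show c + b = b + c from by ring, show d + c = c + d from by ring]
  ring
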